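/- arXiv:0708.1596 — 7 statements merged into one kernel-verified Lean document; each statement's English description precedes it below -/
import Mathlib

section
/- Let A be the matrix with rows (1,−2,2), (2,−1,2), (2,−2,3). If (x,y,z) is a primitive Pythagorean triple (positive integers with x²+y²=z², gcd(x,y,z)=1), then A·(x,y,z)ᵀ is also a primitive Pythagorean triple. -/
theorem stmt_1 (x y z : ℤ) (hx : 0 < x) (hy : 0 < y) (hz : 0 < z)
    (hpyth : x ^ 2 + y ^ 2 = z ^ 2) (hprim : Int.gcd (Int.gcd x y) z = 1) :
    0 < x - 2 * y + 2 * z ∧ 0 < 2 * x - y + 2 * z ∧ 0 < 2 * x - 2 * y + 3 * z ∧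
      (x - 2 * y + 2 * z) ^ 2 + (2 * x - y + 2 * z) ^ 2 = (2 * x - 2 * y + 3 * z) ^ 2 ∧
      Int.gcd (Int.gcd (x - 2 * y + 2 * z) (2 * x - y + 2 * z)) (2 * x - 2 * y + 3 * z) = 1 := by
  have hzy : y < z := by nlinarith
  refine ⟨by linarith, by linarith, by linarith, by linear_combination hpyth, ?_⟩
  set a := x - 2 * y + 2 * z with ha
  set b := 2 * x - y + 2 * z with hb
  set c := 2 * x - 2 * y + 3 * z with hc
  set d : ℕ := Int.gcd (Int.gcd a b) c with hd
  have hab : ((Int.gcd a b : ℤ)) ∣ a := Int.gcd_dvd_left _ _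
  have hab' : ((Int.gcd a b : ℤ)) ∣ b := Int.gcd_dvd_right _ _
  have h1 : (d : ℤ) ∣ a := Dvd.dvd.trans (Int.gcd_dvd_left _ _) hab
  have h2 : (d : ℤ) ∣ b := Dvd.dvd.trans (Int.gcd_dvd_left _ _) hab'
  have h3 : (d : ℤ) ∣ c := Int.gcd_dvd_right _ _
  have hdx : (d : ℤ) ∣ x := by
    have : x = a + 2 * b - 2 * c := by ring
    rw [this]; exact dvd_sub (dvd_add h1 (Dvd.dvd.mul_left h2 2)) (Dvd.dvd.mul_left h3 2)
  have hdy : (d : ℤ) ∣ y := by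
    have : y = -(2 * a + b - 2 * c) := by ring
    rw [this]
    exact dvd_neg.mpr (dvd_sub (dvd_add (h1.mul_left 2) h2) (h3.mul_left 2))
  have hdz : (d : ℤ) ∣ z := by
    have : z = -(2 * a + 2 * b - 3 * c) := by ring
    rw [this]
    exact dvd_neg.mpr (dvd_sub (dvd_add (h1.mul_left 2) (h2.mul_left 2)) (h3.mul_left 3))
  have : (d : ℤ) ∣ ((Int.gcd (Int.gcd x y) z : ℕ) : ℤ) :=
    Int.dvd_coe_gcd (Int.dvd_coe_gcd hdx hdy) hdz
  rw [hprim] at this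
  exact Nat.dvd_one.mp (by exact_mod_cast this)
end

section
/- Let B be the matrix with rows (1,2,2), (2,1,2), (2,2,3). If (x,y,z) is a primitive Pythagorean triple, then B·(x,y,z)ᵀ is a primitive Pythagorean triple. -/
theorem stmt_2 (x y z : ℤ) (hx : 0 < x) (hy : 0 < y) (hz : 0 < z)
    (hpyth : x ^ 2 + y ^ 2 = z ^ 2) (hprim : Int.gcd (Int.gcd x y) z = 1) :
    0 < x + 2 * y + 2 * z ∧ 0 < 2 * x + y + 2 * z ∧ 0 < 2 * x + 2 * y + 3 * z ∧
      (x + 2 * y + 2 * z) ^ 2 + (2 * x + y + 2 * z) ^ 2 = (2 * x + 2 * y + 3 * z) ^ 2 ∧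
      Int.gcd (Int.gcd (x + 2 * y + 2 * z) (2 * x + y + 2 * z)) (2 * x + 2 * y + 3 * z) = 1 := by
  refine ⟨by linarith, by linarith, by linarith, by linear_combination hpyth, ?_⟩
  set a := x + 2 * y + 2 * z with ha
  set b := 2 * x + y + 2 * z with hb
  set c := 2 * x + 2 * y + 3 * z with hc
  have h1 : ((Int.gcd (Int.gcd a b) c : ℤ)) ∣ a :=
    (Int.gcd_dvd_left _ _).trans (Int.gcd_dvd_left _ _)
  have h2 : ((Int.gcd (Int.gcd a b) c : ℤ)) ∣ b :=
    (Int.gcd_dvd_left _ _).trans (Int.gcd_dvd_right _ _)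
  have h3 : ((Int.gcd (Int.gcd a b) c : ℤ)) ∣ c := Int.gcd_dvd_right _ _
  have hxd : ((Int.gcd (Int.gcd a b) c : ℤ)) ∣ x := by
    have : x = a + 2 * b - 2 * c := by rw [ha, hb, hc]; ring
    rw [this]
    exact dvd_sub (dvd_add h1 (Dvd.dvd.mul_left h2 2)) (Dvd.dvd.mul_left h3 2)
  have hyd : ((Int.gcd (Int.gcd a b) c : ℤ)) ∣ y := by
    have : y = 2 * a + b - 2 * c := by rw [ha, hb, hc]; ring
    rw [this]
    exact dvd_sub (dvd_add (Dvd.dvd.mul_left h1 2) h2) (Dvd.dvd.mul_left h3 2)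
  have hzd : ((Int.gcd (Int.gcd a b) c : ℤ)) ∣ z := by
    have : z = 3 * c - 2 * a - 2 * b := by rw [ha, hb, hc]; ring
    rw [this]
    exact dvd_sub (dvd_sub (Dvd.dvd.mul_left h3 3) (Dvd.dvd.mul_left h1 2)) (Dvd.dvd.mul_left h2 2)
  have : ((Int.gcd (Int.gcd a b) c : ℤ)) ∣ ((Int.gcd (Int.gcd x y) z : ℤ)) :=
    Int.dvd_coe_gcd (Int.dvd_coe_gcd hxd hyd) hzd
  rw [hprim] at this
  exact Nat.dvd_one.mp (Int.natCast_dvd_natCast.mp (by exact_mod_cast this))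
end

section
/- Let C be the matrix with rows (−1,2,2), (−2,1,2), (−2,2,3). If (x,y,z) is a primitive Pythagorean triple, then C·(x,y,z)ᵀ is a primitive Pythagorean triple. -/
theorem stmt_3 (x y z : ℤ) (hx : 0 < x) (hy : 0 < y) (hz : 0 < z)
    (hpyth : x ^ 2 + y ^ 2 = z ^ 2) (hprim : Int.gcd (Int.gcd x y) z = 1) :
    0 < -x + 2 * y + 2 * z ∧ 0 < -(2 * x) + y + 2 * z ∧ 0 < -(2 * x) + 2 * y + 3 * z ∧
      (-x + 2 * y + 2 * z) ^ 2 + (-(2 * x) + y + 2 * z) ^ 2 = (-(2 * x) + 2 * y + 3 * z) ^ 2 ∧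
      Int.gcd (Int.gcd (-x + 2 * y + 2 * z) (-(2 * x) + y + 2 * z)) (-(2 * x) + 2 * y + 3 * z) = 1 := by
  have hxz : x < z := by nlinarith
  refine ⟨by linarith, by linarith, by linarith, by linear_combination hpyth, ?_⟩
  set a := -x + 2 * y + 2 * z with ha
  set b := -(2 * x) + y + 2 * z with hb
  set c := -(2 * x) + 2 * y + 3 * z with hc
  have hda : (Int.gcd (Int.gcd a b) c : ℤ) ∣ a :=
    dvd_trans (Int.coe_gcd (Int.gcd a b) c ▸ gcd_dvd_left _ _)
      (Int.coe_gcd a b ▸ gcd_dvd_left a b)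
  have hdb : (Int.gcd (Int.gcd a b) c : ℤ) ∣ b :=
    dvd_trans (Int.coe_gcd (Int.gcd a b) c ▸ gcd_dvd_left _ _)
      (Int.coe_gcd a b ▸ gcd_dvd_right a b)
  have hdc : (Int.gcd (Int.gcd a b) c : ℤ) ∣ c :=
    Int.coe_gcd (Int.gcd a b) c ▸ gcd_dvd_right _ _
  have hdx : (Int.gcd (Int.gcd a b) c : ℤ) ∣ x := by
    have : x = -a - 2 * b + 2 * c := by rw [ha, hb, hc]; ring
    rw [this]
    exact dvd_add (dvd_sub (dvd_neg.mpr hda) (Dvd.dvd.mul_left hdb 2)) (Dvd.dvd.mul_left hdc 2)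
  have hdy : (Int.gcd (Int.gcd a b) c : ℤ) ∣ y := by
    have : y = 2 * a + b - 2 * c := by rw [ha, hb, hc]; ring
    rw [this]
    exact dvd_sub (dvd_add (Dvd.dvd.mul_left hda 2) hdb) (Dvd.dvd.mul_left hdc 2)
  have hdz : (Int.gcd (Int.gcd a b) c : ℤ) ∣ z := by
    have : z = -(2 * a) - 2 * b + 3 * c := by rw [ha, hb, hc]; ring
    rw [this]
    exact dvd_add (dvd_sub (dvd_neg.mpr (Dvd.dvd.mul_left hda 2)) (Dvd.dvd.mul_left hdb 2))
      (Dvd.dvd.mul_left hdc 3)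
  have h1 : (Int.gcd (Int.gcd a b) c : ℤ) ∣ (Int.gcd (Int.gcd x y) z : ℤ) :=
    Int.dvd_coe_gcd (Int.dvd_coe_gcd hdx hdy) hdz
  rw [hprim] at h1
  have := Int.eq_one_of_dvd_one (by positivity) h1
  exact_mod_cast this
end

section
/- For each positive integer k, define (p_k, t_k, q_k) recursively by (p₁,t₁,q₁) = (209,120,241) and (p_k, t_k, q_k) = (7p_{k−1} − 4t_{k−1} + 8q_{k−1}, 4p_{k−1} − t_{k−1} + 4q_{k−1}, 8p_{k−1} − 4t_{k−1} + 9q_{k−1}). Then for all k ≥ 1: p_k² + t_k² = q_k², p_k > t_k, t_k is even, and t_k = (q_k − 1)/2. -/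
theorem stmt_11 (p t q : ℕ → ℤ)
    (hp1 : p 1 = 209) (ht1 : t 1 = 120) (hq1 : q 1 = 241)
    (hrec : ∀ k ≥ 1, p (k + 1) = 7 * p k - 4 * t k + 8 * q k ∧
      t (k + 1) = 4 * p k - t k + 4 * q k ∧
      q (k + 1) = 8 * p k - 4 * t k + 9 * q k) :
    ∀ k ≥ 1, p k ^ 2 + t k ^ 2 = q k ^ 2 ∧ t k < p k ∧ 2 ∣ t k ∧
      2 * t k = q k - 1 := by
  have main : ∀ k ≥ 1, (p k ^ 2 + t k ^ 2 = q k ^ 2 ∧ t k < p k ∧ 2 ∣ t k ∧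
      2 * t k = q k - 1) ∧ 0 ≤ t k ∧ 1 ≤ q k := by
    intro k hk
    induction k, hk using Nat.le_induction with
    | base => refine ⟨⟨?_, ?_, ?_, ?_⟩, ?_, ?_⟩ <;> simp [hp1, ht1, hq1] <;> norm_num
    | succ n hn ih =>
      obtain ⟨⟨hpyth, hlt, hdvd, heq⟩, ht0, hq0⟩ := ih
      obtain ⟨hp, ht, hq⟩ := hrec n hn
      refine ⟨⟨?_, ?_, ?_, ?_⟩, ?_, ?_⟩
      · rw [hp, ht, hq]; nlinarith [hpyth]
      · rw [hp, ht]; linarith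
      · rw [ht]
        obtain ⟨m, hm⟩ := hdvd
        exact ⟨2 * p n - m + 2 * q n, by rw [hm]; ring⟩
      · rw [ht, hq]; linarith
      · rw [ht]; linarith
      · rw [hq]; linarith
  exact fun k hk => (main k hk).1
end

section
/- Let p, q be positive integers with p ≤ q, √(q²−p²) = (q−1)/2, and q ≥ 241. Then 1/((2+√3)q) − 2/((2+√3)q²) < |√3/2 − p/q| < 1/(2√3·q). -/
set_option maxHeartbeats 1000000


theorem stmt_12 (p q : ℕ) (hp : 0 < p) (hpq : p ≤ q) (hq : 241 ≤ q)
    (ht : ((q : ℤ) - 1) ^ 2 = 4 * ((q : ℤ) ^ 2 - (p : ℤ) ^ 2)) :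
    1 / ((2 + Real.sqrt 3) * q) - 2 / ((2 + Real.sqrt 3) * q ^ 2) <
        |Real.sqrt 3 / 2 - (p : ℝ) / q| ∧
      |Real.sqrt 3 / 2 - (p : ℝ) / q| < 1 / (2 * Real.sqrt 3 * q) := by
  have hs2 : Real.sqrt 3 ^ 2 = 3 := Real.sq_sqrt (by norm_num)
  set s := Real.sqrt 3 with hs
  clear_value s
  have hsnn : 0 ≤ s := hs ▸ Real.sqrt_nonneg 3
  have hs0 : (1.73 : ℝ) < s := by nlinarith
  have hs1 : s < 1.74 := by nlinarith
  have hQ : (241:ℝ) ≤ (q:ℝ) := by exact_mod_cast hq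
  have hQ0 : (0:ℝ) < (q:ℝ) := by linarith
  have hP : (1:ℝ) ≤ (p:ℝ) := by exact_mod_cast hp
  have htR : ((q:ℝ) - 1) ^ 2 = 4 * ((q:ℝ) ^ 2 - (p:ℝ) ^ 2) := by exact_mod_cast ht
  have key : 4*(p:ℝ)^2 = 3*(q:ℝ)^2 + 2*(q:ℝ) - 1 := by nlinarith [htR]
  have hsq : s^2 * (q:ℝ)^2 = 3 * (q:ℝ)^2 := by rw [hs2]
  have hsp : s^2 * (p:ℝ)^2 = 3 * (p:ℝ)^2 := by rw [hs2]
  have h3q : s^2 * (q:ℝ)^3 = 3 * (q:ℝ)^3 := by rw [hs2]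
  have hsQ : s * (q:ℝ) < 1.74 * q := mul_lt_mul_of_pos_right hs1 hQ0
  have hsQ' : (1.73:ℝ) * q < s * q := mul_lt_mul_of_pos_right hs0 hQ0
  -- s*q < 2*p
  have h1 : s * (q:ℝ) < 2 * (p:ℝ) := by
    refine lt_of_pow_lt_pow_left₀ 2 (by positivity) ?_
    nlinarith [hsq, key]
  -- s*q + 0.55 < 2*p
  have hl1 : s * (q:ℝ) + 0.55 < 2 * (p:ℝ) := by
    refine lt_of_pow_lt_pow_left₀ 2 (by positivity) ?_
    nlinarith [hsq, key, hsQ]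
  -- 3*q + 0.9 < 2*s*p
  have hl2 : 3 * (q:ℝ) + 0.9 < 2 * s * (p:ℝ) := by
    refine lt_of_pow_lt_pow_left₀ 2 (by positivity) ?_
    nlinarith [hsp, key]
  -- 2*s*p < 3*q + 1
  have hub2 : 2 * s * (p:ℝ) < 3 * (q:ℝ) + 1 := by
    refine lt_of_pow_lt_pow_left₀ 2 (by positivity) ?_
    nlinarith [hsp, key]
  have hneg : s / 2 - (p:ℝ) / q < 0 := by
    rw [sub_neg, div_lt_div_iff₀ (by norm_num) hQ0]
    linarith
  rw [abs_of_neg hneg]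
  have hq0 : (q:ℝ) ≠ 0 := ne_of_gt hQ0
  have h2s : (0:ℝ) < 2 + s := by linarith
  have habs : -(s/2 - (p:ℝ)/q) = (2*(p:ℝ) - s*q)/(2*q) := by
    field_simp
    ring
  rw [habs]
  have hQ2 : (0:ℝ) < (q:ℝ)^2 := by positivity
  constructor
  · have hlhs : 1 / ((2+s) * (q:ℝ)) - 2 / ((2+s) * (q:ℝ)^2) = ((q:ℝ) - 2)/((2+s) * q^2) := by
      field_simp
    rw [hlhs, div_lt_div_iff₀ (by positivity) (by positivity)]
    nlinarith [mul_lt_mul_of_pos_right hl1 hQ2, mul_lt_mul_of_pos_right hl2 hQ2, h3q]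
  · rw [div_lt_div_iff₀ (by positivity) (by positivity)]
    nlinarith [mul_lt_mul_of_pos_right hub2 hQ0, hsq]
end

section
/- Define q_k recursively by q₁ = 241 and q_{k+1} = 8p_k − 4t_k + 9q_k where (p_k,t_k,q_k) follows the recursion (p₁,t₁,q₁)=(209,120,241), p_{k+1} = 7p_k − 4t_k + 8q_k, t_{k+1} = 4p_k − t_k + 4q_k. Then for all k ≥ 1, 241·(7+4√3)^{k−1} < q_k (with equality allowed at k=1) and q_k < 241·(13.947)^{k−1}. -/
theorem stmt_13 (p t q : ℕ → ℤ)
    (hp1 : p 1 = 209) (ht1 : t 1 = 120) (hq1 : q 1 = 241)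
    (hrec : ∀ k ≥ 1, p (k + 1) = 7 * p k - 4 * t k + 8 * q k ∧
      t (k + 1) = 4 * p k - t k + 4 * q k ∧
      q (k + 1) = 8 * p k - 4 * t k + 9 * q k) :
    ∀ k ≥ 1, 241 * (7 + 4 * Real.sqrt 3) ^ (k - 1) ≤ (q k : ℝ) ∧
      (q k : ℝ) ≤ 241 * (13.947 : ℝ) ^ (k - 1) := by
  have s3 : Real.sqrt 3 ^ 2 = 3 := Real.sq_sqrt (by norm_num)
  have s3nn : (0:ℝ) ≤ Real.sqrt 3 := Real.sqrt_nonneg 3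
  have s3le : Real.sqrt 3 ≤ 2 := by
    nlinarith [s3, s3nn]
  have key : ∀ k, 1 ≤ k → (241 ≤ q k ∧ 0 ≤ p k ∧ 0 ≤ t k ∧ q k = 2 * t k + 1 ∧
      p k ^ 2 + t k ^ 2 = q k ^ 2 ∧
      241 * (7 + 4 * Real.sqrt 3) ^ (k - 1) ≤ (q k : ℝ) ∧
      (q k : ℝ) ≤ 241 * (13.947 : ℝ) ^ (k - 1)) := by
    intro k hk
    induction k with
    | zero => omega
    | succ n ih =>
      rcases Nat.lt_or_ge n 1 with hn | hn
      · interval_cases n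
        simp only [hp1, ht1, hq1]
        norm_num
      · obtain ⟨hQ, hP, hT, hqt, hpyth, hlo, hhi⟩ := ih hn
        obtain ⟨ep, et, eq'⟩ := hrec n hn
        have hQ' : 241 ≤ q (n + 1) := by omega
        have hP' : 0 ≤ p (n + 1) := by omega
        have hT' : 0 ≤ t (n + 1) := by omega
        have hqt' : q (n + 1) = 2 * t (n + 1) + 1 := by omega
        have hpyth' : p (n + 1) ^ 2 + t (n + 1) ^ 2 = q (n + 1) ^ 2 := by
          rw [ep, et, eq']; ring_nf; linarith [hpyth]
        refine ⟨hQ', hP', hT', hqt', hpyth', ?_, ?_⟩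
        · -- lower bound
          have h1 : (7 + 4 * Real.sqrt 3) * (q n : ℝ) ≤ (q (n + 1) : ℝ) := by
            have hqr : (q (n+1) : ℝ) = 8 * (p n : ℝ) - 4 * (t n : ℝ) + 9 * (q n : ℝ) := by
              exact_mod_cast congrArg (Int.cast : ℤ → ℝ) eq'
            have hqtr : (q n : ℝ) = 2 * (t n : ℝ) + 1 := by exact_mod_cast hqt
            have hpyr : (p n : ℝ) ^ 2 + (t n : ℝ) ^ 2 = (q n : ℝ) ^ 2 := by exact_mod_cast hpyth
            have hQr : (241:ℝ) ≤ (q n : ℝ) := by exact_mod_cast hQ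
            have hPr : (0:ℝ) ≤ (p n : ℝ) := by exact_mod_cast hP
            rw [hqr]
            nlinarith [sq_nonneg (8 * (p n : ℝ) + 2 - 4 * Real.sqrt 3 * (q n : ℝ)), s3, s3nn, s3le, sq_nonneg ((p n : ℝ))]
          have hpos : (0:ℝ) < 7 + 4 * Real.sqrt 3 := by linarith
          have hstep : (241:ℝ) * (7 + 4 * Real.sqrt 3) ^ n =
              241 * (7 + 4 * Real.sqrt 3) ^ (n - 1) * (7 + 4 * Real.sqrt 3) := by
            rw [mul_assoc, ← pow_succ]
            congr 2
            omega
          simp only [Nat.add_sub_cancel]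
          rw [hstep]
          calc 241 * (7 + 4 * Real.sqrt 3) ^ (n - 1) * (7 + 4 * Real.sqrt 3)
              ≤ (q n : ℝ) * (7 + 4 * Real.sqrt 3) := by
                apply mul_le_mul_of_nonneg_right hlo (le_of_lt hpos)
            _ ≤ (q (n + 1) : ℝ) := by rw [mul_comm]; exact h1
        · -- upper bound
          have h1 : (q (n + 1) : ℝ) ≤ 13.947 * (q n : ℝ) := by
            have hqr : (q (n+1) : ℝ) = 8 * (p n : ℝ) - 4 * (t n : ℝ) + 9 * (q n : ℝ) := by
              exact_mod_cast congrArg (Int.cast : ℤ → ℝ) eq'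
            have hqtr : (q n : ℝ) = 2 * (t n : ℝ) + 1 := by exact_mod_cast hqt
            have hpyr : (p n : ℝ) ^ 2 + (t n : ℝ) ^ 2 = (q n : ℝ) ^ 2 := by exact_mod_cast hpyth
            have hQr : (241:ℝ) ≤ (q n : ℝ) := by exact_mod_cast hQ
            have hPr : (0:ℝ) ≤ (p n : ℝ) := by exact_mod_cast hP
            rw [hqr]
            nlinarith [sq_nonneg (6.947 * (q n : ℝ) - 2 - 8 * (p n : ℝ)), sq_nonneg ((q n:ℝ) - 241)]
          have hstep : (241:ℝ) * (13.947:ℝ) ^ n =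
              241 * (13.947:ℝ) ^ (n - 1) * 13.947 := by
            rw [mul_assoc, ← pow_succ]
            congr 2
            omega
          simp only [Nat.add_sub_cancel]
          rw [hstep]
          calc (q (n+1) : ℝ) ≤ 13.947 * (q n : ℝ) := h1
            _ ≤ 13.947 * (241 * (13.947:ℝ) ^ (n - 1)) := by
                apply mul_le_mul_of_nonneg_left hhi (by norm_num)
            _ = 241 * (13.947:ℝ) ^ (n - 1) * 13.947 := by ring
  intro k hk
  exact (key k hk).2.2.2.2.2
end

section
/- Let p, q be coprime positive integers with √3/2 < p/q < 1, q ≥ 13, and suppose q² − p² is a perfect square with √(q²−p²) ≤ q/2. Then p/q − √3/2 > 1/(3√3·q). -/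
theorem stmt_14 (p q t : ℕ) (hp : 0 < p) (hq : 0 < q) (hco : Nat.Coprime p q)
    (hlb : Real.sqrt 3 / 2 < (p : ℝ) / q) (hub : (p : ℝ) / q < 1)
    (hq13 : 13 ≤ q) (ht : t ^ 2 + p ^ 2 = q ^ 2) (htq : 2 * t ≤ q) :
    1 / (3 * Real.sqrt 3 * q) < (p : ℝ) / q - Real.sqrt 3 / 2 := by
  -- first: 2*t < q strictly
  have h2t : 2 * t < q := by
    rcases lt_or_eq_of_le htq with h | h
    · exact h
    · exfalso
      subst h
      -- ht : t^2 + p^2 = (2*t)^2, so p^2 = 3*t^2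
      have hp3 : p ^ 2 = 3 * t ^ 2 := by ring_nf at ht ⊢; nlinarith [ht]
      have htd : t ∣ 2 * t := dvd_mul_left t 2
      have hcopt : Nat.Coprime p t := Nat.Coprime.coprime_dvd_right htd hco
      have hcopt2 : Nat.Coprime (t ^ 2) (p ^ 2) := hcopt.symm.pow 2 2
      have hdvd : t ^ 2 ∣ p ^ 2 := ⟨3, by linarith⟩
      have h1 : t ^ 2 ∣ 1 := by
        have := Nat.dvd_gcd (dvd_refl (t ^ 2)) hdvd
        rwa [hcopt2] at this
      have ht1 : t = 1 := by
        have h2 := Nat.dvd_one.mp h1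
        rcases pow_eq_one_iff (n := 2) |>.mp h2 with h3 | h3
        · exact h3
        · norm_num at h3
      omega
  -- key natural number inequality
  have key : 108 * t ^ 2 + 36 * q + 4 < 27 * q ^ 2 := by
    rcases Nat.lt_or_ge (2 * t + 1) q with h | h
    · -- 2*t + 2 ≤ q
      have h2 : 2 * t + 2 ≤ q := by omega
      have e1 : q * (2 * t + 2) ≤ q * q := Nat.mul_le_mul_left q h2
      have e2 : t * (2 * t) ≤ t * q := Nat.mul_le_mul_left t (le_of_lt h2t)
      nlinarith [e1, e2, hq13]
    · have hqe : q = 2 * t + 1 := by omega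
      subst hqe
      nlinarith [hq13]
  -- move to reals
  have hs2 : Real.sqrt 3 ^ 2 = 3 := Real.sq_sqrt (by norm_num)
  have hs0 : (0 : ℝ) < Real.sqrt 3 := Real.sqrt_pos.mpr (by norm_num)
  set s := Real.sqrt 3 with hs
  have hq0 : (0 : ℝ) < q := by exact_mod_cast hq
  have hqne : (q : ℝ) ≠ 0 := ne_of_gt hq0
  have htR : (t : ℝ) ^ 2 + (p : ℝ) ^ 2 = (q : ℝ) ^ 2 := by exact_mod_cast ht
  have keyR : 108 * (t : ℝ) ^ 2 + 36 * (q : ℝ) + 4 < 27 * (q : ℝ) ^ 2 := by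
    exact_mod_cast key
  have h108 : (9 * (q : ℝ) + 2) ^ 2 < 108 * (p : ℝ) ^ 2 := by nlinarith [keyR, htR]
  have h6 : 9 * (q : ℝ) + 2 < 6 * s * p := by
    have h0 : (0 : ℝ) ≤ 6 * s * p := by positivity
    refine lt_of_pow_lt_pow_left₀ 2 h0 ?_
    have e2 : (6 * s * (p : ℝ)) ^ 2 = 108 * (p : ℝ) ^ 2 := by
      rw [show (6 * s * (p : ℝ)) ^ 2 = 36 * s ^ 2 * (p : ℝ) ^ 2 from by ring, hs2]
      ring
    rw [e2]; exact h108
  -- multiply h6 by s : s*(9q+2) < 18 p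
  have h9 : s * (9 * (q : ℝ) + 2) < 18 * p := by
    have := mul_lt_mul_of_pos_left h6 hs0
    calc s * (9 * (q : ℝ) + 2) < s * (6 * s * p) := this
      _ = 6 * s ^ 2 * p := by ring
      _ = 18 * p := by rw [hs2]; ring
  -- rewrite 1/(3*s*q) = s/(9*q)
  have e1 : 1 / (3 * s * (q : ℝ)) = s / (9 * q) := by
    rw [div_eq_div_iff (by positivity) (by positivity)]
    have : s * (3 * s * (q : ℝ)) = 3 * s ^ 2 * q := by ring
    rw [this, hs2]; ring
  rw [e1]
  rw [div_sub_div _ _ hqne (two_ne_zero), div_lt_div_iff₀ (by positivity) (by positivity)]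
  have h10 := mul_lt_mul_of_pos_right h9 hq0
  nlinarith [h10]
end
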